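/- Let G = {g₁, …, gₙ} be a finite subgroup of the automorphism group of a topological group W, let X = W/G be the orbit space with projection π: W → X, and define μ(π(a), π(b)) = [π(a·g₁(b)), …, π(a·gₙ(b))]. Then μ is well-defined: the multiset [π(a·g(b)) : g ∈ G] does not depend on the choice of representatives a, b of their G-orbits. -/
import Mathlib


open MulAction in
theorem coset_mul_well_defined (W : Type*) [Group W] (G : Subgroup (MulAut W))
    [Fintype G] (a b : W) (h k : G) :
    ((Finset.univ.val : Multiset G).map
        (fun g => Quotient.mk (orbitRel G W) ((h • a) * g • (k • b)))) =
      ((Finset.univ.val : Multiset G).map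
        (fun g => Quotient.mk (orbitRel G W) (a * g • b))) := by
  have key : ∀ g : G, Quotient.mk (orbitRel G W) ((h • a) * g • (k • b)) =
      Quotient.mk (orbitRel G W) (a * ((h⁻¹ * g * k : G) • b)) := by
    intro g
    refine Quotient.sound ⟨h, ?_⟩
    show h • (a * (h⁻¹ * g * k : G) • b) = h • a * g • (k • b)
    rw [smul_mul', smul_smul, smul_smul]
    congr 2
    group
  have perm : (Finset.univ.val : Multiset G).map (fun g => h⁻¹ * g * k) =
      (Finset.univ.val : Multiset G) := by
    have := Finset.map_univ_equiv ((Equiv.mulRight (k : G)).trans (Equiv.mulLeft (h⁻¹ : G)))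
    have := congrArg Finset.val this
    simpa [Finset.map, Function.comp, mul_assoc] using this
  calc ((Finset.univ.val : Multiset G).map
        (fun g => Quotient.mk (orbitRel G W) ((h • a) * g • (k • b))))
      = (Finset.univ.val : Multiset G).map
          ((fun g => Quotient.mk (orbitRel G W) (a * g • b)) ∘ (fun g => h⁻¹ * g * k)) := by
        exact Multiset.map_congr rfl (fun g _ => key g)
    _ = ((Finset.univ.val : Multiset G).map (fun g => h⁻¹ * g * k)).map
          (fun g => Quotient.mk (orbitRel G W) (a * g • b)) := by
        rw [Multiset.map_map]
    _ = _ := by rw [perm]
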